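/- Define c_n = n^{−2} · log₂(2^n ∏_{k=1}^{n}(2^k+1)) for integers n ≥ 1. Then the sequence (c_n) is strictly decreasing, i.e., c_{n+1} < c_n for all n ≥ 1, and c_n < 0.74 for all n ≥ 7. -/

import Mathlib

/-- The number of pure `n`-qubit stabilizer states: `2^n ∏_{k=1}^n (2^k + 1)`. -/
def stabCount (n : ℕ) : ℕ := 2 ^ n * ∏ k ∈ Finset.Icc 1 n, (2 ^ k + 1)

/-- `c_n = n^{−2} log₂(2^n ∏_{k=1}^n (2^k+1))`. -/
noncomputable def cSeq (n : ℕ) : ℝ := Real.logb 2 (stabCount n) / (n : ℝ) ^ 2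

lemma stabCount_pos (n : ℕ) : 0 < stabCount n := by
  unfold stabCount
  refine Nat.mul_pos (Nat.pow_pos (n := n) (by norm_num)) ?_
  exact Finset.prod_pos fun k _ => by positivity

lemma stabCount_succ (n : ℕ) : stabCount (n + 1) = stabCount n * (2 * (2 ^ (n + 1) + 1)) := by
  unfold stabCount
  rw [Finset.prod_Icc_succ_top (by omega : 1 ≤ n + 1)]
  ring

lemma stabCount_sq_lower (n : ℕ) : 2 ^ (n * (n + 3)) ≤ stabCount n ^ 2 := by
  induction n with
  | zero => simp [stabCount]
  | succ n ih =>
    rw [stabCount_succ, mul_pow]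
    have h1 : (2:ℕ) ^ (n + 2) ≤ 2 * (2 ^ (n + 1) + 1) := by
      have : (2:ℕ) ^ (n + 2) = 2 * 2 ^ (n + 1) := by ring
      omega
    have h2 : ((2:ℕ) ^ (n + 2)) ^ 2 ≤ (2 * (2 ^ (n + 1) + 1)) ^ 2 :=
      Nat.pow_le_pow_left h1 2
    calc (2:ℕ) ^ ((n + 1) * (n + 1 + 3)) = 2 ^ (n * (n + 3)) * (2 ^ (n + 2)) ^ 2 := by
          rw [← pow_mul, ← pow_add]; ring_nf
      _ ≤ stabCount n ^ 2 * (2 * (2 ^ (n + 1) + 1)) ^ 2 := Nat.mul_le_mul ih h2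

lemma logb_two_pow (m : ℕ) : Real.logb 2 ((2:ℝ) ^ m) = m := by
  rw [Real.logb_pow, Real.logb_self_eq_one (by norm_num), mul_one]

lemma logb_stabCount_lower (n : ℕ) : (n : ℝ) * ((n : ℝ) + 3) / 2 ≤ Real.logb 2 (stabCount n) := by
  have hpos : (0:ℝ) < (stabCount n : ℝ) := by exact_mod_cast stabCount_pos n
  have hle : ((2:ℝ)) ^ (n * (n + 3)) ≤ (stabCount n : ℝ) ^ 2 := by
    exact_mod_cast stabCount_sq_lower n
  have h1 : Real.logb 2 ((2:ℝ) ^ (n * (n + 3))) ≤ Real.logb 2 ((stabCount n : ℝ) ^ 2) :=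
    Real.logb_le_logb_of_le (by norm_num) (by positivity) hle
  rw [logb_two_pow, Real.logb_pow] at h1
  push_cast at h1
  linarith

lemma logb_stabCount_succ (n : ℕ) :
    Real.logb 2 (stabCount (n + 1)) =
      Real.logb 2 (stabCount n) + 1 + Real.logb 2 ((2:ℝ) ^ (n + 1) + 1) := by
  have h1 : ((stabCount (n + 1) : ℕ) : ℝ) =
      (stabCount n : ℝ) * (2 * ((2:ℝ) ^ (n + 1) + 1)) := by
    rw [stabCount_succ]; push_cast; ring
  have hs : (stabCount n : ℝ) ≠ 0 := by
    have := stabCount_pos n; positivity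
  have hp : ((2:ℝ) ^ (n + 1) + 1) ≠ 0 := by positivity
  rw [h1, Real.logb_mul hs (by positivity), Real.logb_mul (by norm_num) hp,
    Real.logb_self_eq_one (by norm_num)]
  ring

lemma cSeq_step (n : ℕ) (hn : 1 ≤ n) : cSeq (n + 1) < cSeq n := by
  set L := Real.logb 2 (stabCount n) with hL
  set B := Real.logb 2 ((2:ℝ) ^ (n + 1) + 1) with hBdef
  have hN : (1:ℝ) ≤ (n : ℝ) := by exact_mod_cast hn
  have hB : B < (n : ℝ) + 2 := by
    have h1 : ((2:ℝ) ^ (n + 1) + 1) < (2:ℝ) ^ (n + 2) := by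
      have he : (2:ℝ) ^ (n + 2) = 2 * 2 ^ (n + 1) := by ring
      rw [he]
      have h2 : (2:ℝ) ≤ (2:ℝ) ^ (n + 1) := by
        calc (2:ℝ) = 2 ^ 1 := (pow_one 2).symm
          _ ≤ 2 ^ (n + 1) := pow_le_pow_right₀ (by norm_num) (by omega)
      linarith
    have := Real.logb_lt_logb (b := 2) (by norm_num) (by positivity) h1
    rw [logb_two_pow] at this
    push_cast at this
    linarith
  have hLlow : (n : ℝ) * ((n : ℝ) + 3) / 2 ≤ L := logb_stabCount_lower n
  unfold cSeq
  rw [← hL, logb_stabCount_succ n, ← hL, ← hBdef]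
  rw [div_lt_div_iff₀ (by positivity) (by positivity)]
  push_cast
  nlinarith [mul_lt_mul_of_pos_left hB (show (0:ℝ) < (n:ℝ)^2 by positivity),
    mul_le_mul_of_nonneg_left hLlow (show (0:ℝ) ≤ 2*(n:ℝ)+1 by linarith)]

lemma stabCount_seven : stabCount 7 = 81284860800 := by
  decide

lemma cSeq_seven : cSeq 7 < 0.74 := by
  have hL : Real.logb 2 (stabCount 7) < 1813 / 50 := by
    have hpow : ((stabCount 7 : ℝ)) ^ 50 < (2:ℝ) ^ 1813 := by
      rw [stabCount_seven]
      exact_mod_cast (show (81284860800:ℕ) ^ 50 < 2 ^ 1813 by set_option maxRecDepth 100000 in decide)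
    have hpos : (0:ℝ) < (stabCount 7 : ℝ) := by exact_mod_cast stabCount_pos 7
    have := Real.logb_lt_logb (b := 2) (by norm_num) (by positivity) hpow
    rw [logb_two_pow, Real.logb_pow] at this
    push_cast at this
    linarith
  unfold cSeq
  rw [div_lt_iff₀ (by norm_num)]
  push_cast
  linarith

/-- The sequence `c_n = n^{−2} log₂(2^n ∏_{k=1}^n (2^k+1))`
is strictly decreasing, and `c_n < 0.74` for all `n ≥ 7`. -/
theorem cSeq_strict_anti_and_lt :
    (∀ n : ℕ, 1 ≤ n → cSeq (n + 1) < cSeq n) ∧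
    (∀ n : ℕ, 7 ≤ n → cSeq n < 0.74) := by
  constructor
  · exact cSeq_step
  · intro n hn
    induction n with
    | zero => omega
    | succ m ih =>
      rcases Nat.lt_or_ge m 7 with hm | hm
      · have : m = 6 := by omega
        subst this
        exact cSeq_seven
      · exact lt_trans (cSeq_step m (by omega)) (ih hm)
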